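/- arXiv:1705.11111 — 4 statements merged into one kernel-verified Lean document; each statement's English description precedes it below -/
import Mathlib

section
/- Under Zermelo navigation with Euclidean data (ᾱ, β̄) with b̄ = ‖β̄‖ < 1, the resulting norm F = α + β with α = √((1−b̄²)ᾱ² + β̄²)/(1−b̄²) and β = −β̄/(1−b̄²) satisfies the inverse relations ᾱ² = (1−b²)(α² − β²) and β̄ = −(1−b²)β, where b = ‖β‖_α; moreover b = b̄. -/
open scoped RealInnerProductSpace

/-- Under Zermelo navigation with Euclidean data `ᾱ(y) = ‖y‖`,
`β̄(y) = ⟪y,W⟫`, `b̄ = ‖W‖ < 1`, the deformed data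
`α² (y) = ((1-b̄²)‖y‖² + β̄(y)²)/(1-b̄²)²` and `β(y) = -β̄(y)/(1-b̄²)` satisfy the
inverse navigation relations `ᾱ² = (1-b²)(α² - β²)` and `β̄ = -(1-b²)β`, and the
`α`-norm `b` of `β` equals `b̄` (expressed by `(β y)² ≤ b̄²·α²(y)` with equality
attained at some nonzero `y`). -/
theorem navigation_deformation_inverse
    {V : Type*} [NormedAddCommGroup V] [InnerProductSpace ℝ V]
    (W : V) (hW : ‖W‖ < 1) (hW0 : W ≠ 0) :
    letI bbar : ℝ := ‖W‖
    letI α2 : V → ℝ := fun y => ((1 - bbar ^ 2) * ‖y‖ ^ 2 + ⟪y, W⟫ ^ 2) / (1 - bbar ^ 2) ^ 2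
    letI β : V → ℝ := fun y => -⟪y, W⟫ / (1 - bbar ^ 2)
    (∀ y : V, ‖y‖ ^ 2 = (1 - bbar ^ 2) * (α2 y - (β y) ^ 2)) ∧
    (∀ y : V, ⟪y, W⟫ = -(1 - bbar ^ 2) * β y) ∧
    (∀ y : V, (β y) ^ 2 ≤ bbar ^ 2 * α2 y) ∧
    (∃ y : V, y ≠ 0 ∧ (β y) ^ 2 = bbar ^ 2 * α2 y) := by

  have hs : (0:ℝ) < 1 - ‖W‖ ^ 2 := by nlinarith [norm_nonneg W]
  have hs' : (1:ℝ) - ‖W‖ ^ 2 ≠ 0 := ne_of_gt hs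
  refine ⟨fun y => by field_simp; ring, fun y => by field_simp, fun y => ?_, ⟨W, hW0, ?_⟩⟩
  · have hcs : ⟪y, W⟫ ^ 2 ≤ ‖y‖ ^ 2 * ‖W‖ ^ 2 := by
      have := abs_real_inner_le_norm y W
      nlinarith [abs_nonneg ⟪y, W⟫, sq_abs ⟪y, W⟫]
    simp only []
    rw [div_pow, neg_pow, neg_one_sq, one_mul, ← mul_div_assoc, div_le_div_iff₀ (by positivity) (by positivity)]
    have h2 : ⟪y, W⟫ ^ 2 ≤ ‖W‖ ^ 2 * ((1 - ‖W‖ ^ 2) * ‖y‖ ^ 2 + ⟪y, W⟫ ^ 2) := by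
      nlinarith [mul_le_mul_of_nonneg_left hcs hs.le]
    nlinarith [mul_le_mul_of_nonneg_right h2 (by positivity : (0:ℝ) ≤ (1 - ‖W‖ ^ 2) ^ 2)]
  · have h1 : ⟪W, W⟫ = ‖W‖ ^ 2 := real_inner_self_eq_norm_sq W
    simp only []
    rw [h1]
    field_simp
    ring
end

section
/- With the Lorentz navigation data of the previous setting (⟨W,W⟩_L = b̄² > 1, α² = ((1−b̄²)ᾱ² + β̄²)/(b̄²−1)², β = β̄/(b̄²−1)), the α-norm of β satisfies ‖β‖_α = b̄ > 1. -/
open scoped BigOperators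

/-- The standard Lorentz inner product of signature `(-,…,-,+)` on `ℝ^{n+1}`,
the last coordinate being the timelike one. -/
def lorentzInner (n : ℕ) (x y : Fin (n + 1) → ℝ) : ℝ :=
  x (Fin.last n) * y (Fin.last n) - ∑ i : Fin n, x i.castSucc * y i.castSucc

/-- Reverse Cauchy-Schwarz for the Lorentz form, abstract algebraic version. -/
lemma rev_cs_aux (w t A B s : ℝ) (hA : 0 ≤ A) (hB : 0 ≤ B) (hs : s ^ 2 ≤ A * B)
    (hw : A < w ^ 2) : (w ^ 2 - A) * (t ^ 2 - B) ≤ (w * t - s) ^ 2 := by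
  rcases eq_or_lt_of_le hA with h | h
  · have hs2 : s ^ 2 = 0 := le_antisymm (by nlinarith) (sq_nonneg s)
    have hs0 : s = 0 := by
      have := sq_nonneg s; nlinarith [sq_abs s, abs_nonneg s]
    subst hs0
    nlinarith [mul_nonneg (sq_nonneg w) hB]
  · nlinarith [sq_nonneg (A * t - w * s), mul_nonneg (by linarith : (0:ℝ) ≤ w ^ 2 - A)
      (by linarith : (0:ℝ) ≤ A * B - s ^ 2), h]

/-- Reverse Cauchy-Schwarz for the Lorentz inner product with timelike `W`. -/
lemma lorentz_rev_cs (n : ℕ) (W y : Fin (n + 1) → ℝ) (hW : 0 < lorentzInner n W W) :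
    lorentzInner n W W * lorentzInner n y y ≤ (lorentzInner n W y) ^ 2 := by
  have hcs := Finset.sum_mul_sq_le_sq_mul_sq Finset.univ
    (fun i : Fin n => W i.castSucc) (fun i : Fin n => y i.castSucc)
  have hA : (0:ℝ) ≤ ∑ i : Fin n, W i.castSucc ^ 2 :=
    Finset.sum_nonneg fun i _ => sq_nonneg _
  have hB : (0:ℝ) ≤ ∑ i : Fin n, y i.castSucc ^ 2 :=
    Finset.sum_nonneg fun i _ => sq_nonneg _
  have h1 : lorentzInner n W W = W (Fin.last n) ^ 2 - ∑ i : Fin n, W i.castSucc ^ 2 := by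
    simp [lorentzInner, sq]
  have h2 : lorentzInner n y y = y (Fin.last n) ^ 2 - ∑ i : Fin n, y i.castSucc ^ 2 := by
    simp [lorentzInner, sq]
  have h3 : lorentzInner n W y =
      W (Fin.last n) * y (Fin.last n) - ∑ i : Fin n, W i.castSucc * y i.castSucc := rfl
  rw [h1, h2, h3]
  rw [h1] at hW
  exact rev_cs_aux _ _ _ _ _ hA hB hcs (by linarith)

/-- With Lorentz navigation data `⟨W,W⟩_L = b̄² > 1`,
`α²(y) = ((1-b̄²)⟨y,y⟩_L + ⟨W,y⟩_L²)/(b̄²-1)²` and `β(y) = ⟨W,y⟩_L/(b̄²-1)`, the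
`α`-norm of `β` equals `b̄ > 1`: `(β y)² ≤ b̄²·α²(y)` for all `y`, with equality at
some nonzero `y` (so `‖β‖_α² = b̄² > 1`). -/
theorem lorentz_navigation_beta_norm (n : ℕ) (W : Fin (n + 1) → ℝ)
    (hW : 1 < lorentzInner n W W) :
    letI b2 : ℝ := lorentzInner n W W
    letI α2 : (Fin (n + 1) → ℝ) → ℝ := fun y =>
      ((1 - b2) * lorentzInner n y y + (lorentzInner n W y) ^ 2) / (b2 - 1) ^ 2
    letI β : (Fin (n + 1) → ℝ) → ℝ := fun y => lorentzInner n W y / (b2 - 1)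
    (∀ y : Fin (n + 1) → ℝ, (β y) ^ 2 ≤ b2 * α2 y) ∧
    (∃ y : Fin (n + 1) → ℝ, y ≠ 0 ∧ (β y) ^ 2 = b2 * α2 y) ∧ 1 < b2 := by
  set b2 : ℝ := lorentzInner n W W with hb2
  have hbb : (0:ℝ) < b2 - 1 := by linarith
  have hb1 : (0:ℝ) < (b2 - 1) ^ 2 := by positivity
  refine ⟨?_, ⟨W, ?_, ?_⟩, hW⟩
  · intro y
    have hrev := lorentz_rev_cs n W y (by linarith)
    have key : lorentzInner n W y ^ 2 ≤
        b2 * ((1 - b2) * lorentzInner n y y + lorentzInner n W y ^ 2) := by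
      nlinarith [hrev, sq_nonneg (lorentzInner n W y)]
    simp only [div_pow, ← mul_div_assoc]
    gcongr
  · intro h
    have h0 : lorentzInner n W W = 0 := by rw [h]; simp [lorentzInner]
    rw [hb2, h0] at hW
    linarith
  · have hne : b2 - 1 ≠ 0 := ne_of_gt hbb
    field_simp
    ring
end

section
/- On ℝⁿ with μ ∈ ℝ, λ ∈ ℝ, and constant vector a ∈ ℝⁿ, the 1-form β̄ with β̄(x,y) = (λ⟨x,y⟩ + (1+μ|x|²)⟨a,y⟩ − μ⟨a,x⟩⟨x,y⟩)/(1+μ|x|²)^{3/2} is closed: d β̄ = 0 on the region {1+μ|x|² > 0}, where ⟨·,·⟩ is the standard Euclidean inner product. -/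
open scoped BigOperators

/-- The standard Euclidean inner product on `ℝⁿ`. -/
def edot {n : ℕ} (x y : Fin n → ℝ) : ℝ := ∑ i, x i * y i


noncomputable def prj {n : ℕ} (i : Fin n) : (Fin n → ℝ) →L[ℝ] ℝ :=
  ContinuousLinearMap.proj i

@[simp] lemma prj_apply {n : ℕ} (i : Fin n) (v : Fin n → ℝ) : prj i v = v i := rfl

noncomputable def edotL {n : ℕ} (a : Fin n → ℝ) : (Fin n → ℝ) →L[ℝ] ℝ :=
  ∑ i, a i • prj i

@[simp] lemma edotL_apply {n : ℕ} (a v : Fin n → ℝ) : edotL a v = edot a v := by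
  simp [edotL, edot]

lemma hasFDerivAt_edot_const {n : ℕ} (a x : Fin n → ℝ) :
    HasFDerivAt (fun y => edot a y) (edotL a) x := by
  have : (fun y : Fin n → ℝ => edot a y) = fun y => edotL a y := by
    funext y; rw [edotL_apply]
  rw [this]
  exact (edotL a).hasFDerivAt

lemma hasFDerivAt_edot_self {n : ℕ} (x : Fin n → ℝ) :
    HasFDerivAt (fun y => edot y y) ((2:ℝ) • edotL x) x := by
  have h : ∀ i : Fin n, HasFDerivAt (fun y : Fin n → ℝ => y i * y i)
      (x i • prj i + x i • prj i) x :=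
    fun i => (prj i).hasFDerivAt.mul (prj i).hasFDerivAt
  have := HasFDerivAt.fun_sum (fun i (_ : i ∈ Finset.univ) => h i)
  refine this.congr_fderiv ?_
  · apply ContinuousLinearMap.ext; intro v
    simp [edotL, edot, two_mul, Finset.sum_add_distrib, Finset.mul_sum]

lemma keyderiv {n : ℕ} (μ lam : ℝ) (a : Fin n → ℝ) (x : Fin n → ℝ)
    (hx : 0 < 1 + μ * edot x x) (i j : Fin n) :
    fderiv ℝ (fun y => (lam * y i + (1 + μ * edot y y) * a i - μ * edot a y * y i)
        / (1 + μ * edot y y) ^ ((3 : ℝ) / 2)) x (Pi.single j 1) =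
      (lam * x i + (1 + μ * edot x x) * a i - μ * edot a x * x i) *
          ((-3 / 2 * (1 + μ * edot x x) ^ (-(3:ℝ) / 2 - 1)) * (μ * (2 * edot x (Pi.single j 1)))) +
        (1 + μ * edot x x) ^ (-(3:ℝ) / 2) *
          (lam * (Pi.single j 1 : Fin n → ℝ) i + a i * (μ * (2 * edot x (Pi.single j 1))) -
            (μ * edot a x * (Pi.single j 1 : Fin n → ℝ) i + x i * (μ * edot a (Pi.single j 1)))) := by
  have hne : (1 + μ * edot x x) ≠ 0 := ne_of_gt hx
  have hN : HasFDerivAt (fun y => lam * y i + (1 + μ * edot y y) * a i - μ * edot a y * y i)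
      ((lam • prj i + (a i) • (μ • ((2:ℝ) • edotL x))) -
        ((μ * edot a x) • prj i + (x i) • (μ • edotL a))) x :=
    (((prj i).hasFDerivAt.const_mul lam).add
      ((((hasFDerivAt_edot_self x).const_mul μ).const_add 1).mul_const (a i))).sub
      (((hasFDerivAt_edot_const a x).const_mul μ).mul ((prj i).hasFDerivAt))
  have hP : HasFDerivAt (fun y => (1 + μ * edot y y) ^ (-(3:ℝ)/2))
      (((-(3:ℝ)/2) * (1 + μ * edot x x) ^ (-(3:ℝ)/2 - 1)) • (μ • ((2:ℝ) • edotL x))) x :=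
    (((hasFDerivAt_edot_self x).const_mul μ).const_add 1).rpow_const (Or.inl hne)
  have hmul := hN.mul hP
  have heq : (fun y => (lam * y i + (1 + μ * edot y y) * a i - μ * edot a y * y i)
        / (1 + μ * edot y y) ^ ((3 : ℝ) / 2)) =ᶠ[nhds x]
      (fun y => (lam * y i + (1 + μ * edot y y) * a i - μ * edot a y * y i) *
        (1 + μ * edot y y) ^ (-(3:ℝ)/2)) := by
    have hcont : Continuous (fun y : Fin n → ℝ => 1 + μ * edot y y) := by
      unfold edot; fun_prop
    have hop : ∀ᶠ y in nhds x, 0 < 1 + μ * edot y y :=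
      (hcont.continuousAt).eventually (eventually_gt_nhds hx)
    filter_upwards [hop] with y hy
    rw [div_eq_mul_inv, ← Real.rpow_neg (le_of_lt hy)]
    norm_num
  have hb := hmul.congr_of_eventuallyEq heq
  rw [hb.fderiv]
  simp only [ContinuousLinearMap.smul_apply, ContinuousLinearMap.add_apply,
    ContinuousLinearMap.sub_apply, prj_apply, edotL_apply, smul_eq_mul]

@[simp] lemma edot_single {n : ℕ} (c : Fin n → ℝ) (j : Fin n) :
    edot c (Pi.single j 1) = c j := by
  simp [edot, Pi.single_apply]

/-- On `ℝⁿ`, for `μ, λ ∈ ℝ` and a constant vector `a`, the 1-form `β̄`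
with components
`b̄ᵢ(x) = (λxᵢ + (1+μ|x|²)aᵢ - μ⟨a,x⟩xᵢ)/(1+μ|x|²)^{3/2}` is closed on the region
`{1+μ|x|² > 0}`: `∂_j b̄ᵢ = ∂_i b̄ⱼ` for all `i, j`. -/
theorem closed_conformal_one_form {n : ℕ} (μ lam : ℝ) (a : Fin n → ℝ) :
    letI b : Fin n → (Fin n → ℝ) → ℝ := fun i x =>
      (lam * x i + (1 + μ * edot x x) * a i - μ * edot a x * x i)
        / (1 + μ * edot x x) ^ ((3 : ℝ) / 2)
    ∀ x : Fin n → ℝ, 0 < 1 + μ * edot x x →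
      ∀ i j : Fin n,
        fderiv ℝ (b i) x (Pi.single j 1) = fderiv ℝ (b j) x (Pi.single i 1) := by
  intro x hx i j
  have hne : (1 + μ * edot x x) ≠ 0 := ne_of_gt hx
  rw [keyderiv μ lam a x hx i j, keyderiv μ lam a x hx j i]
  have hsub : (1 + μ * edot x x) ^ (-(3:ℝ)/2 - 1)
      = (1 + μ * edot x x) ^ (-(3:ℝ)/2) / (1 + μ * edot x x) := by
    rw [Real.rpow_sub hx, Real.rpow_one]
  rw [hsub]
  simp only [edot_single, Pi.single_apply]
  rcases eq_or_ne i j with rfl | hij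
  · ring
  · simp only [if_neg hij, if_neg (Ne.symm hij)]
    field_simp
    ring
end

section
/- Let (V, ⟨·,·⟩) be a Euclidean space, β̄ a linear functional with norm b̄ satisfying 0 < b̄ < 1, and define α = √((1−b̄²)ᾱ² + β̄²)/(1−b̄²) (with ᾱ the Euclidean norm) and β = −β̄/(b̄(1−b̄²)). Then ‖β‖_α = 1, i.e. F = α + β is a singular (parabolic) Randers norm. -/
open scoped RealInnerProductSpace

/-- Singular Randers construction. For a Euclidean space `(V,⟪·,·⟫)` and a
linear functional `β̄(y) = ⟪y,W⟫` with norm `b̄ = ‖W‖` satisfying `0 < b̄ < 1`, define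
`α²(y) = ((1-b̄²)‖y‖² + β̄(y)²)/(1-b̄²)²` and `β(y) = -β̄(y)/(b̄(1-b̄²))`. Then
`‖β‖_α = 1`, i.e. `(β y)² ≤ α²(y)` for all `y` with equality attained at some nonzero
`y`, so `F = α + β` is a singular (parabolic) Randers norm. -/
theorem singular_randers_norm_one
    {V : Type*} [NormedAddCommGroup V] [InnerProductSpace ℝ V]
    (W : V) (hW0 : 0 < ‖W‖) (hW1 : ‖W‖ < 1) :
    letI bbar : ℝ := ‖W‖
    letI α2 : V → ℝ := fun y => ((1 - bbar ^ 2) * ‖y‖ ^ 2 + ⟪y, W⟫ ^ 2) / (1 - bbar ^ 2) ^ 2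
    letI β : V → ℝ := fun y => -⟪y, W⟫ / (bbar * (1 - bbar ^ 2))
    (∀ y : V, (β y) ^ 2 ≤ α2 y) ∧ (∃ y : V, y ≠ 0 ∧ (β y) ^ 2 = α2 y) := by
  have hs : (0:ℝ) < 1 - ‖W‖ ^ 2 := by nlinarith
  refine ⟨fun y => ?_, W, ?_, ?_⟩
  · have hcs : ⟪y, W⟫ ^ 2 ≤ ‖y‖ ^ 2 * ‖W‖ ^ 2 := by
      have h := abs_real_inner_le_norm y W
      have h2 : ⟪y, W⟫ ^ 2 = |⟪y, W⟫| ^ 2 := (sq_abs _).symm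
      nlinarith [abs_nonneg ⟪y, W⟫, norm_nonneg y, norm_nonneg W]
    simp only
    rw [div_pow, div_le_div_iff₀ (by positivity) (by positivity)]
    nlinarith [mul_le_mul_of_nonneg_left hcs (by positivity : (0:ℝ) ≤ (1 - ‖W‖ ^ 2) ^ 3)]
  · exact fun h => by simp [h] at hW0
  · have hWW : ⟪W, W⟫ = ‖W‖ ^ 2 := real_inner_self_eq_norm_sq W
    simp only [hWW]
    field_simp
    ring
end
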